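/- Let S be a numerical semigroup and x ∈ S with x ≠ 0. Then S \ {x} is a numerical semigroup if and only if x is a minimal generator of S. -/
import Mathlib

open Set

/-- A numerical semigroup: contains 0, closed under addition, finite complement. -/
def IsNumSgp (S : Set ℕ) : Prop :=
  0 ∈ S ∧ (∀ a ∈ S, ∀ b ∈ S, a + b ∈ S) ∧ (Sᶜ : Set ℕ).Finite

/-- The multiplicity: least positive element. -/
noncomputable def mult (S : Set ℕ) : ℕ := sInf {n | n ∈ S ∧ n ≠ 0}

/-- next_S(s) = min { x ∈ S | s < x }. -/
noncomputable def nextS (S : Set ℕ) (s : ℕ) : ℕ := sInf {x | x ∈ S ∧ s < x}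

/-- The concentration C(S) = max { next_S(s) - s | s ∈ S \ {0} }. -/
noncomputable def conc (S : Set ℕ) : ℕ :=
  sSup {d | ∃ s ∈ S, s ≠ 0 ∧ d = nextS S s - s}

/-- The Frobenius number: largest gap. -/
noncomputable def frob (S : Set ℕ) : ℕ := sSup (Sᶜ : Set ℕ)

/-- The genus: number of gaps. -/
noncomputable def genus (S : Set ℕ) : ℕ := (Sᶜ : Set ℕ).ncard

/-- x is a minimal generator of S. -/
def IsMinGen (S : Set ℕ) (x : ℕ) : Prop :=
  x ∈ S ∧ x ≠ 0 ∧ ¬∃ a ∈ S, ∃ b ∈ S, a ≠ 0 ∧ b ≠ 0 ∧ a + b = x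

/-- The embedding dimension: number of minimal generators. -/
noncomputable def edim (S : Set ℕ) : ℕ := {x | IsMinGen S x}.ncard

/-- n(S): the number of elements of S smaller than the Frobenius number. -/
noncomputable def nS (S : Set ℕ) : ℕ := {s | s ∈ S ∧ s < frob S}.ncard

/-- The half-line Δ(m) = {0} ∪ {m, m+1, ...}. -/
def Delta (m : ℕ) : Set ℕ := {0} ∪ {n | m ≤ n}

def IsHalfLine (S : Set ℕ) : Prop := ∃ m, S = Delta m

/-- An irreducible numerical semigroup. -/
def Irred (S : Set ℕ) : Prop :=
  ¬∃ T₁ T₂ : Set ℕ, IsNumSgp T₁ ∧ IsNumSgp T₂ ∧ S ⊂ T₁ ∧ S ⊂ T₂ ∧ S = T₁ ∩ T₂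

theorem stmt6 (S : Set ℕ) (x : ℕ) (hS : IsNumSgp S) (hx : x ∈ S) (hx0 : x ≠ 0) :
    IsNumSgp (S \ {x}) ↔ IsMinGen S x := by
  obtain ⟨h0, hadd, hfin⟩ := hS
  constructor
  · rintro ⟨-, hadd', -⟩
    refine ⟨hx, hx0, ?_⟩
    rintro ⟨a, ha, b, hb, ha0, hb0, hab⟩
    have hax : a ≠ x := by omega
    have hbx : b ≠ x := by omega
    have := hadd' a ⟨ha, hax⟩ b ⟨hb, hbx⟩
    exact this.2 hab
  · rintro ⟨-, -, hmin⟩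
    refine ⟨⟨h0, fun h => hx0 h.symm⟩, ?_, ?_⟩
    · rintro a ⟨ha, hax⟩ b ⟨hb, hbx⟩
      refine ⟨hadd a ha b hb, fun hab => ?_⟩
      simp only [Set.mem_singleton_iff] at hab hax hbx
      rcases Nat.eq_zero_or_pos a with h | h
      · exact hbx (by omega)
      rcases Nat.eq_zero_or_pos b with h' | h'
      · exact hax (by omega)
      exact hmin ⟨a, ha, b, hb, by omega, by omega, hab⟩
    · have : ((S \ {x})ᶜ : Set ℕ) = Sᶜ ∪ {x} := by
        ext n; simp [not_or]; tauto
      rw [this]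
      exact hfin.union (Set.finite_singleton x)
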